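/- arXiv:2005.05609 — 2 statements merged into one kernel-verified Lean document; each statement's English description precedes it below -/
import Mathlib

section
/- (Needle-perturbation estimates.) Let 0 < α ≤ 1 and R ≥ 0. Let u : [a,b] → ℝⁿ be measurable with ‖u(s)‖ ≤ R for almost every s, let y ∈ ℝⁿ, τ ∈ (a,b), v ∈ ℝⁿ with ‖v‖ ≤ R, and 0 < h ≤ b − τ. Define u_h := v on [τ, τ+h) and u_h := u elsewhere on [a,b], and set x(t) := y + ∫_a^t ((t−s)^{α−1}/Γ(α)) u(s) ds and x_h(t) := y + ∫_a^t ((t−s)^{α−1}/Γ(α)) u_h(s) ds. Then: (a) ‖x_h(t) − x(t)‖ ≤ (2R/Γ(α+1)) h^α for all t ∈ [a,b]; (b) for every t ∈ (τ+h, b], ‖ (x_h(t) − x(t))/h − ((t−τ)^{α−1}/Γ(α)) (v − u(τ)) ‖ ≤ ((t−τ)^{α−1}/Γ(α)) ‖ (1/h)∫_τ^{τ+h} u(s) ds − u(τ) ‖ + (2R/Γ(α)) ( (t−(τ+h))^{α−1} − (t−τ)^{α−1} ). -/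
open MeasureTheory Set

lemma my_measurable_rpow_const (c : ℝ) : Measurable fun x : ℝ => x ^ c := by
  have hfe : (fun x : ℝ => x ^ c) = fun x =>
      if x < 0 then Real.exp (Real.log x * c) * Real.cos (c * Real.pi)
      else if x = 0 then (if c = 0 then 1 else 0) else Real.exp (Real.log x * c) := by
    funext x
    rcases lt_trichotomy x 0 with hx | hx | hx
    · rw [if_pos hx, Real.rpow_def_of_neg hx, mul_comm c Real.pi]
    · subst hx
      rw [if_neg (lt_irrefl _), if_pos rfl]
      by_cases hc : c = 0 <;> simp [hc, Real.zero_rpow]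
    · rw [if_neg (not_lt.mpr hx.le), if_neg hx.ne', Real.rpow_def_of_pos hx]
  rw [hfe]
  refine Measurable.ite measurableSet_Iio
    (((Real.measurable_log.mul measurable_const).exp).mul measurable_const) ?_
  exact Measurable.ite (MeasurableSet.singleton 0) measurable_const
    ((Real.measurable_log.mul measurable_const).exp)

lemma my_rpow_subadd {x y p : ℝ} (hx : 0 ≤ x) (hy : 0 ≤ y) (hp : 0 ≤ p) (hp1 : p ≤ 1) :
    (x + y) ^ p ≤ x ^ p + y ^ p := by
  have := NNReal.rpow_add_le_add_rpow x.toNNReal y.toNNReal hp hp1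
  have hxy : ((x.toNNReal + y.toNNReal : NNReal) : ℝ) = x + y := by
    simp [Real.coe_toNNReal _ hx, Real.coe_toNNReal _ hy]
  calc (x + y) ^ p = (((x.toNNReal + y.toNNReal : NNReal) : ℝ)) ^ p := by rw [hxy]
    _ = (((x.toNNReal + y.toNNReal) ^ p : NNReal) : ℝ) := by
        rw [NNReal.coe_rpow]
    _ ≤ (((x.toNNReal ^ p + y.toNNReal ^ p : NNReal)) : ℝ) := by exact_mod_cast this
    _ = x ^ p + y ^ p := by
        push_cast [NNReal.coe_rpow, Real.coe_toNNReal _ hx, Real.coe_toNNReal _ hy]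
        ring

lemma my_kernel_intable {α : ℝ} (hα0 : 0 < α) {a t : ℝ} (hat : a ≤ t) :
    IntegrableOn (fun s => (t - s) ^ (α - 1)) (Ioc a t) volume := by
  have h1 : IntervalIntegrable (fun x : ℝ => x ^ (α - 1)) volume 0 (t - a) :=
    intervalIntegral.intervalIntegrable_rpow' (by linarith)
  have h2 := h1.comp_sub_left t
  rw [sub_sub_cancel, sub_zero] at h2
  exact (intervalIntegrable_iff_integrableOn_Ioc_of_le hat).mp h2.symm

lemma my_int {n : ℕ} {a b R α : ℝ} (hα0 : 0 < α)
    (w : ℝ → EuclideanSpace ℝ (Fin n)) (hw : Measurable w)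
    (hbd : ∀ᵐ s ∂(volume : Measure ℝ), s ∈ Icc a b → ‖w s‖ ≤ R)
    {t : ℝ} (hat : a ≤ t) (htb : t ≤ b) (c : ℝ) :
    IntegrableOn (fun s => ((t - s) ^ (α - 1) / c) • w s) (Ioc a t) volume := by
  have hker := my_kernel_intable hα0 hat
  refine Integrable.mono' (g := fun s => (t - s) ^ (α - 1) * (|R| / |c|))
    (hker.mul_const _) ?_ ?_
  · exact ((((my_measurable_rpow_const (α - 1)).comp
      (measurable_const.sub measurable_id)).div_const c).smul hw).aestronglyMeasurable
  · filter_upwards [ae_restrict_mem measurableSet_Ioc, ae_restrict_of_ae hbd] with s hs hbs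
    have hts : (0:ℝ) ≤ t - s := by linarith [hs.2]
    have h1 : (0:ℝ) ≤ (t - s) ^ (α - 1) := Real.rpow_nonneg hts _
    have hsb : s ∈ Icc a b := ⟨hs.1.le, hs.2.trans htb⟩
    rw [norm_smul, Real.norm_eq_abs, abs_div, abs_of_nonneg h1]
    have hwR : ‖w s‖ ≤ |R| := (hbs hsb).trans (le_abs_self R)
    calc (t - s) ^ (α - 1) / |c| * ‖w s‖ ≤ (t - s) ^ (α - 1) / |c| * |R| := by
          apply mul_le_mul_of_nonneg_left hwR (by positivity)
      _ = (t - s) ^ (α - 1) * (|R| / |c|) := by ring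

theorem stmt_16 (n : ℕ) (hn : 1 ≤ n) (a b : ℝ) (hab : a < b)
    (α : ℝ) (hα0 : 0 < α) (hα1 : α ≤ 1) (R : ℝ) (hR : 0 ≤ R)
    (u : ℝ → EuclideanSpace ℝ (Fin n)) (hm : Measurable u)
    (hb : ∀ᵐ s ∂(volume : Measure ℝ), s ∈ Icc a b → ‖u s‖ ≤ R)
    (y v : EuclideanSpace ℝ (Fin n)) (hv : ‖v‖ ≤ R)
    (τ : ℝ) (hτ : τ ∈ Ioo a b) (h : ℝ) (hh0 : 0 < h) (hhb : h ≤ b - τ)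
    (x xh : ℝ → EuclideanSpace ℝ (Fin n))
    (hx : ∀ t, x t = y + ∫ s in a..t, ((t - s) ^ (α - 1) / Real.Gamma α) • u s)
    (hxh : ∀ t, xh t = y + ∫ s in a..t, ((t - s) ^ (α - 1) / Real.Gamma α) •
        (if τ ≤ s ∧ s < τ + h then v else u s)) :
    (∀ t ∈ Icc a b, ‖xh t - x t‖ ≤ 2 * R / Real.Gamma (α + 1) * h ^ α) ∧
      ∀ t ∈ Ioc (τ + h) b,
        ‖(h⁻¹ • (xh t - x t)) - ((t - τ) ^ (α - 1) / Real.Gamma α) • (v - u τ)‖ ≤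
          ((t - τ) ^ (α - 1) / Real.Gamma α) * ‖(h⁻¹ • ∫ s in τ..(τ + h), u s) - u τ‖
            + (2 * R / Real.Gamma α) * ((t - (τ + h)) ^ (α - 1) - (t - τ) ^ (α - 1)) := by
  have hGa : 0 < Real.Gamma α := Real.Gamma_pos_of_pos hα0
  have haτ : a < τ := hτ.1
  have hτb : τ < b := hτ.2
  have hmuh : Measurable (fun s => if τ ≤ s ∧ s < τ + h then v else u s) := by
    exact Measurable.ite (measurableSet_Ico (a := τ) (b := τ + h)) measurable_const hm
  have hbuh : ∀ᵐ s ∂(volume : Measure ℝ), s ∈ Icc a b →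
      ‖(if τ ≤ s ∧ s < τ + h then v else u s)‖ ≤ R := by
    filter_upwards [hb] with s hs hmem
    by_cases hc : τ ≤ s ∧ s < τ + h
    · rw [if_pos hc]; exact hv
    · rw [if_neg hc]; exact hs hmem
  have hdiff : ∀ t, a ≤ t → t ≤ b → xh t - x t =
      ∫ s in (Ioc a t ∩ Ico τ (τ + h)),
        ((t - s) ^ (α - 1) / Real.Gamma α) • (v - u s) := by
    intro t hat htb
    have hfu := my_int hα0 u hm hb hat htb (Real.Gamma α)
    have hfuh := my_int hα0 _ hmuh hbuh hat htb (Real.Gamma α)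
    rw [hx, hxh, add_sub_add_left_eq_sub, intervalIntegral.integral_of_le hat,
      intervalIntegral.integral_of_le hat, ← integral_sub hfuh hfu]
    rw [← setIntegral_indicator measurableSet_Ico]
    apply setIntegral_congr_fun measurableSet_Ioc
    intro s _
    dsimp only
    by_cases hc : τ ≤ s ∧ s < τ + h
    · rw [if_pos hc, indicator_of_mem (show s ∈ Ico τ (τ + h) from hc), smul_sub]
    · rw [if_neg hc, indicator_of_notMem (show s ∉ Ico τ (τ + h) from hc), sub_self]
  constructor
  · intro t ht
    obtain ⟨hat, htb⟩ := ht
    rw [hdiff t hat htb]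
    have hGa1 : 0 < Real.Gamma (α + 1) := Real.Gamma_pos_of_pos (by linarith)
    have hRHS : 0 ≤ 2 * R / Real.Gamma (α + 1) * h ^ α := by positivity
    by_cases hcase : τ ≤ t
    · set m := min t (τ + h) with hmdef
      have hτm : τ ≤ m := le_min hcase (by linarith)
      have hmt : m ≤ t := min_le_left _ _
      have hmh : m ≤ τ + h := min_le_right _ _
      have hSsub : Ioc a t ∩ Ico τ (τ + h) ⊆ Icc τ m := fun s hs =>
        ⟨hs.2.1, le_min hs.1.2 hs.2.2.le⟩
      have hIccsub : Icc τ m ⊆ Ioc a t := fun s hs => ⟨haτ.trans_le hs.1, hs.2.trans hmt⟩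
      have hg_int : IntegrableOn (fun s => (t - s) ^ (α - 1) * (2 * R / Real.Gamma α))
          (Ioc a t) volume := (my_kernel_intable hα0 hat).mul_const _
      have h1 : ‖∫ s in Ioc a t ∩ Ico τ (τ + h), ((t - s) ^ (α - 1) / Real.Gamma α) • (v - u s)‖
          ≤ ∫ s in Ioc a t ∩ Ico τ (τ + h), (t - s) ^ (α - 1) * (2 * R / Real.Gamma α) := by
        apply norm_integral_le_of_norm_le (hg_int.mono_set inter_subset_left)
        filter_upwards [ae_restrict_mem (measurableSet_Ioc.inter measurableSet_Ico),
          ae_restrict_of_ae hb] with s hs hbs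
        have hts : (0:ℝ) ≤ t - s := by linarith [hs.1.2]
        have h2R : ‖v - u s‖ ≤ 2 * R := by
          have := hbs ⟨hs.1.1.le, hs.1.2.trans htb⟩
          calc ‖v - u s‖ ≤ ‖v‖ + ‖u s‖ := norm_sub_le _ _
            _ ≤ 2 * R := by linarith
        rw [norm_smul, Real.norm_eq_abs, abs_div, abs_of_nonneg (Real.rpow_nonneg hts _),
          abs_of_nonneg hGa.le]
        calc (t - s) ^ (α - 1) / Real.Gamma α * ‖v - u s‖
            ≤ (t - s) ^ (α - 1) / Real.Gamma α * (2 * R) := by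
              apply mul_le_mul_of_nonneg_left h2R (by positivity)
          _ = (t - s) ^ (α - 1) * (2 * R / Real.Gamma α) := by ring
      have h2 : ∫ s in Ioc a t ∩ Ico τ (τ + h), (t - s) ^ (α - 1) * (2 * R / Real.Gamma α)
          ≤ ∫ s in Icc τ m, (t - s) ^ (α - 1) * (2 * R / Real.Gamma α) := by
        apply setIntegral_mono_set (hg_int.mono_set hIccsub) ?_
          (HasSubset.Subset.eventuallyLE hSsub)
        filter_upwards [ae_restrict_mem measurableSet_Icc] with s hs
        have h0 : (0:ℝ) ≤ t - s := by linarith [hs.2]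
        have := Real.rpow_nonneg h0 (α - 1)
        positivity
      have h3 : ∫ s in Icc τ m, (t - s) ^ (α - 1) * (2 * R / Real.Gamma α)
          = ((t - τ) ^ α - (t - m) ^ α) / α * (2 * R / Real.Gamma α) := by
        rw [MeasureTheory.integral_Icc_eq_integral_Ioc, ← intervalIntegral.integral_of_le hτm,
          intervalIntegral.integral_mul_const]
        congr 1
        rw [intervalIntegral.integral_comp_sub_left (fun s => s ^ (α - 1)) t,
          integral_rpow (Or.inl (by linarith : (-1:ℝ) < α - 1))]
        have e : α - 1 + 1 = α := by ring
        rw [e]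
      have htm : (0:ℝ) ≤ t - m := by linarith
      have hsub : (t - τ) ^ α - (t - m) ^ α ≤ h ^ α := by
        have hs1 := my_rpow_subadd (x := t - m) (y := m - τ) htm (by linarith) hα0.le hα1
        have e : t - m + (m - τ) = t - τ := by ring
        rw [e] at hs1
        have hs2 : (m - τ) ^ α ≤ h ^ α := Real.rpow_le_rpow (by linarith) (by linarith) hα0.le
        linarith
      calc ‖∫ s in Ioc a t ∩ Ico τ (τ + h), ((t - s) ^ (α - 1) / Real.Gamma α) • (v - u s)‖
          ≤ ((t - τ) ^ α - (t - m) ^ α) / α * (2 * R / Real.Gamma α) := by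
            rw [← h3]; exact h1.trans h2
        _ ≤ h ^ α / α * (2 * R / Real.Gamma α) := by
            have hc : (0:ℝ) ≤ 2 * R / Real.Gamma α := by positivity
            apply mul_le_mul_of_nonneg_right _ hc
            gcongr
        _ = 2 * R / Real.Gamma (α + 1) * h ^ α := by
            rw [Real.Gamma_add_one hα0.ne']
            field_simp
    · have hempty : Ioc a t ∩ Ico τ (τ + h) = ∅ := by
        rw [eq_empty_iff_forall_notMem]
        rintro s ⟨hs1, hs2⟩
        exact hcase (le_trans hs2.1 hs1.2)
      rw [hempty]
      simp only [Measure.restrict_empty, integral_zero_measure, norm_zero]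
      exact hRHS
  · intro t ht
    obtain ⟨hth, htb⟩ := ht
    have hat : a ≤ t := by linarith
    have h0 : (0:ℝ) < t - (τ + h) := by linarith
    have h0' : (0:ℝ) < t - τ := by linarith
    set K := (t - τ) ^ (α - 1) / Real.Gamma α with hK
    have hKnn : 0 ≤ K := by rw [hK]; positivity
    set K' := (t - (τ + h)) ^ (α - 1) / Real.Gamma α with hK'
    have hKK' : K ≤ K' := by
      rw [hK, hK']
      apply div_le_div_of_nonneg_right ?_ hGa.le
      exact Real.rpow_le_rpow_of_nonpos h0 (by linarith) (by linarith)
    have hIco : MeasurableSet (Ico τ (τ + h)) := measurableSet_Ico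
    have hfin : volume (Ico τ (τ + h)) < ⊤ := by
      rw [Real.volume_Ico]; exact ENNReal.ofReal_lt_top
    have hvol : (volume (Ico τ (τ + h))).toReal = h := by
      rw [Real.volume_Ico, add_sub_cancel_left, ENNReal.toReal_ofReal hh0.le]
    have hkb : ∀ s ∈ Ico τ (τ + h), K ≤ (t - s) ^ (α - 1) / Real.Gamma α ∧
        (t - s) ^ (α - 1) / Real.Gamma α ≤ K' := by
      intro s hs
      have h1 : (0:ℝ) < t - s := by linarith [hs.2]
      constructor
      · rw [hK]
        apply div_le_div_of_nonneg_right ?_ hGa.le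
        exact Real.rpow_le_rpow_of_nonpos h1 (by linarith [hs.1]) (by linarith)
      · rw [hK']
        apply div_le_div_of_nonneg_right ?_ hGa.le
        exact Real.rpow_le_rpow_of_nonpos h0 (by linarith [hs.2]) (by linarith)
    have hbd2R : ∀ᵐ s ∂(volume : Measure ℝ), s ∈ Ico τ (τ + h) → ‖v - u s‖ ≤ 2 * R := by
      filter_upwards [hb] with s hs hmem
      have := hs ⟨by linarith [hmem.1], by linarith [hmem.2]⟩
      calc ‖v - u s‖ ≤ ‖v‖ + ‖u s‖ := norm_sub_le _ _
        _ ≤ 2 * R := by linarith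
    have key : ∀ (f : ℝ → EuclideanSpace ℝ (Fin n)) (C : ℝ), Measurable f →
        (∀ᵐ s ∂(volume : Measure ℝ), s ∈ Ico τ (τ + h) → ‖f s‖ ≤ C) →
        IntegrableOn f (Ico τ (τ + h)) volume := by
      intro f C hfm hC
      refine Integrable.mono' (g := fun _ => C) ?_ hfm.aestronglyMeasurable ?_
      · exact integrableOn_const hfin.ne
      · filter_upwards [ae_restrict_mem hIco, ae_restrict_of_ae hC] with s hs h'
        exact h' hs
    have hmk : Measurable (fun s : ℝ => (t - s) ^ (α - 1) / Real.Gamma α) :=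
      ((my_measurable_rpow_const (α - 1)).comp (measurable_const.sub measurable_id)).div_const _
    have hIu : IntegrableOn u (Ico τ (τ + h)) volume := by
      apply key u R hm
      filter_upwards [hb] with s hs hmem
      exact hs ⟨by linarith [hmem.1], by linarith [hmem.2]⟩
    have hIvu : IntegrableOn (fun s => v - u s) (Ico τ (τ + h)) volume :=
      key _ (2 * R) (measurable_const.sub hm) hbd2R
    have hI1 : IntegrableOn (fun s => ((t - s) ^ (α - 1) / Real.Gamma α) • (v - u s))
        (Ico τ (τ + h)) volume := by
      apply key _ (K' * (2 * R)) (hmk.smul (measurable_const.sub hm))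
      filter_upwards [hbd2R] with s h2 hmem
      have h1 : (0:ℝ) < t - s := by linarith [hmem.2]
      show ‖((t - s) ^ (α - 1) / Real.Gamma α) • (v - u s)‖ ≤ _
      rw [norm_smul, Real.norm_eq_abs, abs_of_nonneg (by positivity)]
      exact mul_le_mul (hkb s hmem).2 (h2 hmem) (norm_nonneg _) (le_trans hKnn hKK')
    have hI2 : IntegrableOn (fun s => (((t - s) ^ (α - 1) / Real.Gamma α) - K) • (v - u s))
        (Ico τ (τ + h)) volume := by
      apply key _ ((K' - K) * (2 * R)) ((hmk.sub measurable_const).smul (measurable_const.sub hm))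
      filter_upwards [hbd2R] with s h2 hmem
      show ‖(((t - s) ^ (α - 1) / Real.Gamma α) - K) • (v - u s)‖ ≤ _
      rw [norm_smul, Real.norm_eq_abs, abs_of_nonneg (sub_nonneg.mpr (hkb s hmem).1)]
      exact mul_le_mul (by linarith [(hkb s hmem).2]) (h2 hmem) (norm_nonneg _) (by linarith)
    have hdiff2 : xh t - x t
        = ∫ s in Ico τ (τ + h), ((t - s) ^ (α - 1) / Real.Gamma α) • (v - u s) := by
      have hsub : Ico τ (τ + h) ⊆ Ioc a t := fun s hs =>
        ⟨by linarith [hs.1], by linarith [hs.2]⟩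
      rw [hdiff t hat htb, inter_eq_self_of_subset_right hsub]
    have hIueq : ∫ s in τ..(τ + h), u s = ∫ s in Ico τ (τ + h), u s := by
      rw [intervalIntegral.integral_of_le (by linarith : τ ≤ τ + h),
        MeasureTheory.integral_Ioc_eq_integral_Ioo, ← MeasureTheory.integral_Ico_eq_integral_Ioo]
    have hconstint : IntegrableOn (fun _ : ℝ => v) (Ico τ (τ + h)) volume := by
      exact integrableOn_const hfin.ne
    have hsplitv : ∫ s in Ico τ (τ + h), (v - u s) = h • v - ∫ s in Ico τ (τ + h), u s := by
      rw [integral_sub hconstint hIu, setIntegral_const, measureReal_def, hvol]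
    have e1 : ∫ s in Ico τ (τ + h), (((t - s) ^ (α - 1) / Real.Gamma α) - K) • (v - u s)
        = (∫ s in Ico τ (τ + h), ((t - s) ^ (α - 1) / Real.Gamma α) • (v - u s))
          - ∫ s in Ico τ (τ + h), K • (v - u s) := by
      have hIg : IntegrableOn (fun s => K • (v - u s)) (Ico τ (τ + h)) volume := hIvu.smul K
      rw [← integral_sub hI1 hIg]
      congr 1
      funext s
      rw [sub_smul]
    have e2 : ∫ s in Ico τ (τ + h), K • (v - u s) = K • ∫ s in Ico τ (τ + h), (v - u s) :=
      integral_smul K _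
    have hmain : (h⁻¹ • (xh t - x t)) - K • (v - u τ)
        = h⁻¹ • (∫ s in Ico τ (τ + h), (((t - s) ^ (α - 1) / Real.Gamma α) - K) • (v - u s))
          - K • ((h⁻¹ • ∫ s in Ico τ (τ + h), u s) - u τ) := by
      rw [hdiff2, e1, e2, hsplitv]
      have hh' : h⁻¹ * h = 1 := inv_mul_cancel₀ hh0.ne'
      match_scalars <;> field_simp <;> ring
    have hJ : ‖∫ s in Ico τ (τ + h), (((t - s) ^ (α - 1) / Real.Gamma α) - K) • (v - u s)‖
        ≤ (K' - K) * (2 * R) * (volume (Ico τ (τ + h))).toReal := by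
      apply norm_setIntegral_le_of_norm_le_const_ae' hfin
      filter_upwards [hbd2R] with s h2 hmem
      rw [norm_smul, Real.norm_eq_abs, abs_of_nonneg (sub_nonneg.mpr (hkb s hmem).1)]
      exact mul_le_mul (by linarith [(hkb s hmem).2]) (h2 hmem) (norm_nonneg _) (by linarith)
    rw [hvol] at hJ
    have hA : ‖h⁻¹ • (∫ s in Ico τ (τ + h), (((t - s) ^ (α - 1) / Real.Gamma α) - K) • (v - u s))‖
        ≤ 2 * R / Real.Gamma α * ((t - (τ + h)) ^ (α - 1) - (t - τ) ^ (α - 1)) := by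
      rw [norm_smul, Real.norm_eq_abs, abs_of_nonneg (inv_nonneg.mpr hh0.le)]
      calc h⁻¹ * ‖∫ s in Ico τ (τ + h), (((t - s) ^ (α - 1) / Real.Gamma α) - K) • (v - u s)‖
          ≤ h⁻¹ * ((K' - K) * (2 * R) * h) := by
            apply mul_le_mul_of_nonneg_left hJ (by positivity)
        _ = 2 * R / Real.Gamma α * ((t - (τ + h)) ^ (α - 1) - (t - τ) ^ (α - 1)) := by
            rw [hK, hK']
            field_simp
    have hB : ‖K • ((h⁻¹ • ∫ s in Ico τ (τ + h), u s) - u τ)‖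
        = K * ‖(h⁻¹ • ∫ s in Ico τ (τ + h), u s) - u τ‖ := by
      rw [norm_smul, Real.norm_eq_abs, abs_of_nonneg hKnn]
    rw [hIueq, hmain]
    calc ‖h⁻¹ • (∫ s in Ico τ (τ + h), (((t - s) ^ (α - 1) / Real.Gamma α) - K) • (v - u s))
          - K • ((h⁻¹ • ∫ s in Ico τ (τ + h), u s) - u τ)‖
        ≤ ‖h⁻¹ • (∫ s in Ico τ (τ + h), (((t - s) ^ (α - 1) / Real.Gamma α) - K) • (v - u s))‖
          + ‖K • ((h⁻¹ • ∫ s in Ico τ (τ + h), u s) - u τ)‖ := norm_sub_le _ _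
      _ ≤ K * ‖(h⁻¹ • ∫ s in Ico τ (τ + h), u s) - u τ‖
          + 2 * R / Real.Gamma α * ((t - (τ + h)) ^ (α - 1) - (t - τ) ^ (α - 1)) := by
            rw [hB]
            linarith [hA]
end

section
/- (Nonexistence of minimizers for purely fractional Bolza problems with a genuinely final-point-dependent Mayer cost.) Let 0 < α < 1 and β > α, and let φ : ℝⁿ×ℝⁿ → ℝ and L : ℝⁿ×ℝⁿ×[a,b] → ℝ be of class C². For (u,y) ∈ L^∞([a,b],ℝⁿ)×ℝⁿ set x(t,u,y) := y + ∫_a^t ((t−s)^{α−1}/Γ(α)) u(s) ds and 𝓛(u,y) := φ(y, x(b,u,y)) + ∫_a^b ((b−s)^{β−1}/Γ(β)) L( x(s,u,y), u(s), s ) ds. If ∂₂φ(x₁,x₂) ≠ 0 for every (x₁,x₂) ∈ ℝⁿ×ℝⁿ, then there is no (u,y) ∈ L^∞([a,b],ℝⁿ)×ℝⁿ satisfying 𝓛(u,y) ≤ 𝓛(u',y') for all (u',y') ∈ L^∞([a,b],ℝⁿ)×ℝⁿ, i.e. the Bolza functional 𝓛 has no global minimizer. -/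
open MeasureTheory Set
open scoped RealInnerProductSpace

/-- The trajectory `x(·,u,y)` associated with a Caputo fractional derivative `u`
of order `α` and initial condition `y`. -/
noncomputable def traj (n : ℕ) (a α : ℝ) (u : ℝ → EuclideanSpace ℝ (Fin n))
    (y : EuclideanSpace ℝ (Fin n)) (t : ℝ) : EuclideanSpace ℝ (Fin n) :=
  y + ∫ s in a..t, ((t - s) ^ (α - 1) / Real.Gamma α) • u s

/-- The Bolza functional. -/
noncomputable def bolza (n : ℕ) (a b α β : ℝ)
    (φ : EuclideanSpace ℝ (Fin n) × EuclideanSpace ℝ (Fin n) → ℝ)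
    (L : EuclideanSpace ℝ (Fin n) × EuclideanSpace ℝ (Fin n) × ℝ → ℝ)
    (u : ℝ → EuclideanSpace ℝ (Fin n)) (y : EuclideanSpace ℝ (Fin n)) : ℝ :=
  φ (y, traj n a α u y b) +
    ∫ s in a..b, ((b - s) ^ (β - 1) / Real.Gamma β) * L (traj n a α u y s, u s, s)

/-- Membership in `L^∞([a,b],ℝⁿ)` (a measurable, essentially bounded representative). -/
def admissible (n : ℕ) (a b : ℝ) (u : ℝ → EuclideanSpace ℝ (Fin n)) : Prop :=
  Measurable u ∧ ∃ C : ℝ, ∀ᵐ s ∂(volume : Measure ℝ), s ∈ Icc a b → ‖u s‖ ≤ C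

variable {n : ℕ}

local notation "E" => EuclideanSpace ℝ (Fin n)

lemma ker_intble {α : ℝ} (hα : (0:ℝ) < α) (t c d : ℝ) :
    IntervalIntegrable (fun s => (t - s) ^ (α - 1)) volume c d := by
  have h := (intervalIntegral.intervalIntegrable_rpow' (a := t - c) (b := t - d) (r := α - 1)
    (by linarith)).comp_sub_left t
  simpa using h

lemma ker_integral {α : ℝ} (hα : (0:ℝ) < α) {c t : ℝ} (hct : c ≤ t) :
    ∫ s in c..t, (t - s) ^ (α - 1) = (t - c) ^ α / α := by
  have := intervalIntegral.integral_comp_sub_left (a := c) (b := t)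
    (fun x : ℝ => x ^ (α - 1)) t
  rw [this, sub_self, integral_rpow (Or.inl (by linarith))]
  rw [sub_add_cancel, Real.zero_rpow hα.ne']
  ring

lemma smulker_intble {α : ℝ} (hα : (0:ℝ) < α) {a b t : ℝ} (h1 : a ≤ t) (h2 : t ≤ b)
    {u : ℝ → E} (hu : Measurable u) {C : ℝ}
    (hC : ∀ᵐ s ∂(volume : Measure ℝ), s ∈ Icc a b → ‖u s‖ ≤ C) :
    IntervalIntegrable (fun s => ((t - s) ^ (α - 1) / Real.Gamma α) • u s) volume a t := by
  have hΓ : (0:ℝ) < Real.Gamma α := Real.Gamma_pos_of_pos hα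
  rw [intervalIntegrable_iff_integrableOn_Ioc_of_le h1]
  have hg : IntegrableOn (fun s => ((t - s) ^ (α - 1) / Real.Gamma α) * C) (Ioc a t) volume := by
    have := ((ker_intble hα t a t).div_const (Real.Gamma α)).mul_const C
    rwa [intervalIntegrable_iff_integrableOn_Ioc_of_le h1] at this
  refine Integrable.mono' hg ?_ ?_
  · exact (((measurable_const.sub measurable_id).pow_const _).div_const _).aemeasurable.aestronglyMeasurable.smul hu.aestronglyMeasurable
  · filter_upwards [ae_restrict_of_ae hC, ae_restrict_mem measurableSet_Ioc] with s hs hmem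
    have hsC : ‖u s‖ ≤ C := hs ⟨le_of_lt hmem.1, hmem.2.trans h2⟩
    have hw : 0 ≤ (t - s) ^ (α - 1) / Real.Gamma α :=
      div_nonneg (Real.rpow_nonneg (by linarith [hmem.2]) _) hΓ.le
    rw [norm_smul, Real.norm_eq_abs, abs_of_nonneg hw]
    exact mul_le_mul_of_nonneg_left hsC hw

lemma traj_bound {α : ℝ} (hα : (0:ℝ) < α) {a b t : ℝ} (h1 : a ≤ t) (h2 : t ≤ b)
    {u : ℝ → E} (hu : Measurable u) {C : ℝ} (hC0 : 0 ≤ C)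
    (hC : ∀ᵐ s ∂(volume : Measure ℝ), s ∈ Icc a b → ‖u s‖ ≤ C) (y : E) :
    ‖traj n a α u y t‖ ≤ ‖y‖ + C * ((b - a) ^ α / (α * Real.Gamma α)) := by
  have hΓ : (0:ℝ) < Real.Gamma α := Real.Gamma_pos_of_pos hα
  refine (norm_add_le _ _).trans (add_le_add le_rfl ?_)
  have hgint : IntervalIntegrable (fun s => C * ((t - s) ^ (α - 1) / Real.Gamma α)) volume a t :=
    ((ker_intble hα t a t).div_const (Real.Gamma α)).const_mul C
  have hb : ‖∫ s in a..t, ((t - s) ^ (α - 1) / Real.Gamma α) • u s‖ ≤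
      |∫ s in a..t, C * ((t - s) ^ (α - 1) / Real.Gamma α)| := by
    refine intervalIntegral.norm_integral_le_abs_of_norm_le ?_ hgint
    rw [uIoc_of_le h1]
    filter_upwards [ae_restrict_of_ae hC, ae_restrict_mem measurableSet_Ioc] with s hs hmem
    have hsC : ‖u s‖ ≤ C := hs ⟨le_of_lt hmem.1, hmem.2.trans h2⟩
    have hw : 0 ≤ (t - s) ^ (α - 1) / Real.Gamma α :=
      div_nonneg (Real.rpow_nonneg (by linarith [hmem.2]) _) hΓ.le
    rw [norm_smul, Real.norm_eq_abs, abs_of_nonneg hw]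
    exact (mul_le_mul_of_nonneg_left hsC hw).trans_eq (mul_comm _ _)
  have hval : ∫ s in a..t, C * ((t - s) ^ (α - 1) / Real.Gamma α)
      = C * ((t - a) ^ α / (α * Real.Gamma α)) := by
    rw [intervalIntegral.integral_const_mul]
    rw [show (fun s => (t - s) ^ (α - 1) / Real.Gamma α) = fun s => (t - s) ^ (α - 1) / Real.Gamma α from rfl]
    rw [intervalIntegral.integral_div, ker_integral hα h1]
    rw [div_div, mul_comm (α) (Real.Gamma α), mul_comm (Real.Gamma α) α]
  refine hb.trans ?_
  rw [hval, abs_of_nonneg (mul_nonneg hC0 (div_nonneg (Real.rpow_nonneg (by linarith) _) (mul_pos hα hΓ).le))]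
  have hmono : (t - a) ^ α ≤ (b - a) ^ α :=
    Real.rpow_le_rpow (by linarith) (by linarith) hα.le
  have : (t - a) ^ α / (α * Real.Gamma α) ≤ (b - a) ^ α / (α * Real.Gamma α) :=
    div_le_div_of_nonneg_right hmono (mul_pos hα hΓ).le |>.trans_eq rfl
  exact mul_le_mul_of_nonneg_left this hC0

/-- A globally-defined measurable version of the trajectory. -/
noncomputable def trajAux (n : ℕ) (a α : ℝ) (u : ℝ → EuclideanSpace ℝ (Fin n))
    (y : EuclideanSpace ℝ (Fin n)) (t : ℝ) : EuclideanSpace ℝ (Fin n) :=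
  y + ∫ s, ({p : ℝ × ℝ | p.2 ∈ Ioc a p.1}.indicator
      (fun p => ((p.1 - p.2) ^ (α - 1) / Real.Gamma α) • u p.2)) (t, s)

lemma trajAux_stronglyMeasurable (a α : ℝ) {u : ℝ → E} (hu : Measurable u) (y : E) :
    StronglyMeasurable (trajAux n a α u y) := by
  have hset : MeasurableSet {p : ℝ × ℝ | p.2 ∈ Ioc a p.1} := by
    apply MeasurableSet.inter
    · exact measurableSet_lt measurable_const measurable_snd
    · exact measurableSet_le measurable_snd measurable_fst
  have hmeas : StronglyMeasurable fun p : ℝ × ℝ =>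
      ({p : ℝ × ℝ | p.2 ∈ Ioc a p.1}.indicator
        (fun p => ((p.1 - p.2) ^ (α - 1) / Real.Gamma α) • u p.2)) p := by
    refine StronglyMeasurable.indicator ?_ hset
    exact ((((measurable_fst.sub measurable_snd).pow_const _).div_const _).smul
      (hu.comp measurable_snd)).stronglyMeasurable
  exact (stronglyMeasurable_const.add hmeas.integral_prod_right')

lemma traj_eq_trajAux (a α : ℝ) (u : ℝ → E) (y : E) {t : ℝ} (h1 : a ≤ t) :
    traj n a α u y t = trajAux n a α u y t := by
  unfold traj trajAux
  congr 1
  rw [intervalIntegral.integral_of_le h1]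
  have : (fun s => ({p : ℝ × ℝ | p.2 ∈ Ioc a p.1}.indicator
      (fun p => ((p.1 - p.2) ^ (α - 1) / Real.Gamma α) • u p.2)) (t, s))
      = (Ioc a t).indicator (fun s => ((t - s) ^ (α - 1) / Real.Gamma α) • u s) := by
    ext s
    by_cases hs : s ∈ Ioc a t
    · rw [Set.indicator_of_mem hs, Set.indicator_of_mem (by exact hs)]
    · rw [Set.indicator_of_notMem hs, Set.indicator_of_notMem (by exact hs)]
  rw [this, MeasureTheory.integral_indicator measurableSet_Ioc]

lemma bolza_intble {α β : ℝ} (hα : (0:ℝ) < α) (hβ : (0:ℝ) < β) {a b : ℝ} (hab : a ≤ b)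
    {u : ℝ → E} (hu : Measurable u) (y : E)
    {L : E × E × ℝ → ℝ} (hL : Continuous L) {M : ℝ}
    (hbd : ∀ᵐ s ∂(volume : Measure ℝ).restrict (Ioc a b),
      |L (traj n a α u y s, u s, s)| ≤ M) :
    IntervalIntegrable
      (fun s => ((b - s) ^ (β - 1) / Real.Gamma β) * L (traj n a α u y s, u s, s))
      volume a b := by
  have hΓ : (0:ℝ) < Real.Gamma β := Real.Gamma_pos_of_pos hβ
  rw [intervalIntegrable_iff_integrableOn_Ioc_of_le hab]
  have hg : IntegrableOn (fun s => M * ((b - s) ^ (β - 1) / Real.Gamma β)) (Ioc a b) volume := by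
    have := ((ker_intble hβ b a b).div_const (Real.Gamma β)).const_mul M
    rwa [intervalIntegrable_iff_integrableOn_Ioc_of_le hab] at this
  refine Integrable.mono' hg ?_ ?_
  · have hmeas : Measurable fun s =>
        ((b - s) ^ (β - 1) / Real.Gamma β) * L (trajAux n a α u y s, u s, s) := by
      refine (((measurable_const.sub measurable_id).pow_const _).div_const _).mul ?_
      exact hL.measurable.comp
        (((trajAux_stronglyMeasurable a α hu y).measurable).prodMk
          (hu.prodMk measurable_id))
    refine hmeas.aestronglyMeasurable.congr ?_
    filter_upwards [ae_restrict_mem measurableSet_Ioc] with s hs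
    rw [traj_eq_trajAux a α u y hs.1.le]
  · filter_upwards [hbd, ae_restrict_mem measurableSet_Ioc] with s hs hmem
    have hw : 0 ≤ (b - s) ^ (β - 1) / Real.Gamma β :=
      div_nonneg (Real.rpow_nonneg (by linarith [hmem.2]) _) hΓ.le
    rw [Real.norm_eq_abs, abs_mul, abs_of_nonneg hw]
    exact (mul_le_mul_of_nonneg_left hs hw).trans_eq (mul_comm _ _)
set_option maxHeartbeats 1000000 in
theorem stmt_18 (n : ℕ) (hn : 1 ≤ n) (a b : ℝ) (hab : a < b)
    (α β : ℝ) (hα0 : 0 < α) (hα1 : α < 1) (hβ : α < β)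
    (φ : EuclideanSpace ℝ (Fin n) × EuclideanSpace ℝ (Fin n) → ℝ)
    (L : EuclideanSpace ℝ (Fin n) × EuclideanSpace ℝ (Fin n) × ℝ → ℝ)
    (hφ : ContDiff ℝ 2 φ) (hL : ContDiff ℝ 2 L)
    (hφ2 : ∀ x₁ x₂ : EuclideanSpace ℝ (Fin n), gradient (fun z => φ (x₁, z)) x₂ ≠ 0) :
    ¬ ∃ u : ℝ → EuclideanSpace ℝ (Fin n), ∃ y : EuclideanSpace ℝ (Fin n),
      admissible n a b u ∧
      ∀ u' : ℝ → EuclideanSpace ℝ (Fin n), ∀ y' : EuclideanSpace ℝ (Fin n),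
        admissible n a b u' → bolza n a b α β φ L u y ≤ bolza n a b α β φ L u' y' := by
  rintro ⟨u, y, ⟨hum, C0, huC0⟩, hmin⟩
  have hΓα : (0:ℝ) < Real.Gamma α := Real.Gamma_pos_of_pos hα0
  have hβ0 : (0:ℝ) < β := hα0.trans hβ
  have hΓβ : (0:ℝ) < Real.Gamma β := Real.Gamma_pos_of_pos hβ0
  set C : ℝ := max C0 0 with hCdef
  have hC0 : (0:ℝ) ≤ C := le_max_right _ _
  have huC : ∀ᵐ s ∂(volume : Measure ℝ), s ∈ Icc a b → ‖u s‖ ≤ C := by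
    filter_upwards [huC0] with s hs hmem
    exact (hs hmem).trans (le_max_left _ _)
  set xb := traj n a α u y b with hxbdef
  set g := gradient (fun z => φ (y, z)) xb with hgdef
  have hg : g ≠ 0 := hφ2 y xb
  have hgn : (0:ℝ) < ‖g‖ := norm_pos_iff.mpr hg
  set v : EuclideanSpace ℝ (Fin n) := (-‖g‖⁻¹) • g with hvdef
  have hv1 : ‖v‖ = 1 := by
    rw [hvdef, norm_smul, norm_neg, norm_inv, norm_norm]
    exact inv_mul_cancel₀ hgn.ne'
  -- differentiability of φ(y, ·)
  have hφy : Differentiable ℝ (fun z : EuclideanSpace ℝ (Fin n) => φ (y, z)) := by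
    have h1 : Differentiable ℝ φ := hφ.differentiable (by norm_num)
    exact h1.comp ((differentiable_const y).prodMk differentiable_id)
  set ψ : ℝ → ℝ := fun ρ => φ (y, xb + ρ • v) with hψdef
  have hline : HasDerivAt (fun ρ : ℝ => xb + ρ • v) v 0 := by
    simpa using ((hasDerivAt_id (0:ℝ)).smul_const v).const_add xb
  have hDψ : HasDerivAt ψ (-‖g‖) 0 := by
    have hgrad : HasGradientAt (fun z => φ (y, z)) g xb := (hφy xb).hasGradientAt
    have hF : HasFDerivAt (fun z => φ (y, z)) (InnerProductSpace.toDual ℝ _ g)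
        (xb + (0:ℝ) • v) := by
      simpa using hgrad.hasFDerivAt
    have hcomp := hF.comp_hasDerivAt 0 hline
    have hval : (InnerProductSpace.toDual ℝ (EuclideanSpace ℝ (Fin n)) g) v = -‖g‖ := by
      rw [InnerProductSpace.toDual_apply_apply, hvdef, real_inner_smul_right,
        real_inner_self_eq_norm_mul_norm]
      field_simp
    rw [hval] at hcomp
    exact hcomp
  have hslope : ∀ᶠ ρ in nhdsWithin (0:ℝ) (Ioi 0), slope ψ 0 ρ < -‖g‖/2 := by
    have h := hasDerivAt_iff_tendsto_slope.mp hDψ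
    have h2 : ∀ᶠ ρ in nhdsWithin (0:ℝ) {(0:ℝ)}ᶜ, slope ψ 0 ρ < -‖g‖/2 :=
      h.eventually_lt_const (by linarith)
    exact h2.filter_mono (nhdsWithin_mono 0 (fun x hx => ne_of_gt hx))
  -- compact bound for L
  set X : ℝ := (b - a) ^ α / (α * Real.Gamma α) with hXdef
  have hX0 : 0 ≤ X := div_nonneg (Real.rpow_nonneg (by linarith) _) (mul_pos hα0 hΓα).le
  set R : ℝ := ‖y‖ + (C + 1) * X with hRdef
  set K : Set (EuclideanSpace ℝ (Fin n) × EuclideanSpace ℝ (Fin n) × ℝ) :=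
    Metric.closedBall 0 R ×ˢ (Metric.closedBall 0 (C+1) ×ˢ Icc a b) with hKdef
  have hK : IsCompact K :=
    (isCompact_closedBall _ _).prod ((isCompact_closedBall _ _).prod isCompact_Icc)
  obtain ⟨M0, hM0⟩ := hK.exists_bound_of_continuousOn hL.continuous.continuousOn
  set M : ℝ := max M0 0 with hMdef
  have hM : ∀ p ∈ K, |L p| ≤ M := by
    intro p hp
    have := hM0 p hp
    rw [Real.norm_eq_abs] at this
    exact this.trans (le_max_left _ _)
  have hMnn : (0:ℝ) ≤ M := le_max_right _ _
  -- choice of ε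
  set K1 : ℝ := ‖g‖ * (β * Real.Gamma β) / (4 * (M+1) * (α * Real.Gamma α)) with hK1def
  have hK1pos : 0 < K1 :=
    div_pos (mul_pos hgn (mul_pos hβ0 hΓβ)) (by positivity)
  have htα : Filter.Tendsto (fun ε : ℝ => ε ^ α) (nhdsWithin 0 (Ioi 0)) (nhds 0) := by
    have := (Real.continuousAt_rpow_const 0 α (Or.inr hα0.le)).tendsto
    rw [Real.zero_rpow hα0.ne'] at this
    exact this.mono_left nhdsWithin_le_nhds
  have htβα : Filter.Tendsto (fun ε : ℝ => ε ^ (β - α)) (nhdsWithin 0 (Ioi 0)) (nhds 0) := by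
    have := (Real.continuousAt_rpow_const 0 (β - α) (Or.inr (by linarith))).tendsto
    rw [Real.zero_rpow (by linarith : β - α ≠ 0)] at this
    exact this.mono_left nhdsWithin_le_nhds
  have htr : Filter.Tendsto (fun ε : ℝ => ε ^ α / (α * Real.Gamma α))
      (nhdsWithin 0 (Ioi 0)) (nhdsWithin 0 (Ioi 0)) := by
    apply tendsto_nhdsWithin_of_tendsto_nhds_of_eventually_within
    · simpa using htα.div_const (α * Real.Gamma α)
    · filter_upwards [eventually_mem_nhdsWithin] with ε (hε : ε ∈ Ioi 0)
      exact div_pos (Real.rpow_pos_of_pos hε _) (mul_pos hα0 hΓα)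
  have c1 : ∀ᶠ ε in nhdsWithin (0:ℝ) (Ioi 0), ε ∈ Ioi (0:ℝ) := eventually_mem_nhdsWithin
  have c2 : ∀ᶠ ε in nhdsWithin (0:ℝ) (Ioi 0), ε ≤ b - a :=
    (eventually_le_nhds (by linarith : (0:ℝ) < b - a)).filter_mono nhdsWithin_le_nhds
  have c3 : ∀ᶠ ε in nhdsWithin (0:ℝ) (Ioi 0),
      slope ψ 0 (ε ^ α / (α * Real.Gamma α)) < -‖g‖/2 := htr.eventually hslope
  have c4 : ∀ᶠ ε in nhdsWithin (0:ℝ) (Ioi 0), ε ^ (β - α) < K1 :=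
    htβα.eventually_lt_const hK1pos
  obtain ⟨ε, hε0, hεba, hεslope, hεK1⟩ := (c1.and (c2.and (c3.and c4))).exists
  rw [Set.mem_Ioi] at hε0
  have hab' : a ≤ b - ε := by linarith
  set r : ℝ := ε ^ α / (α * Real.Gamma α) with hrdef
  have hrpos : 0 < r := div_pos (Real.rpow_pos_of_pos hε0 _) (mul_pos hα0 hΓα)
  -- the perturbation
  set d : ℝ → EuclideanSpace ℝ (Fin n) := (Ioc (b-ε) b).indicator (fun _ => v) with hddef
  have hdmeas : Measurable d := measurable_const.indicator measurableSet_Ioc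
  have hdbound : ∀ s, ‖d s‖ ≤ 1 := by
    intro s
    by_cases h : s ∈ Ioc (b-ε) b
    · rw [hddef, Set.indicator_of_mem h, hv1]
    · rw [hddef, Set.indicator_of_notMem h]; simp
  set u' : ℝ → EuclideanSpace ℝ (Fin n) := fun s => u s + d s with hu'def
  have hu'm : Measurable u' := hum.add hdmeas
  have hu'C : ∀ᵐ s ∂(volume : Measure ℝ), s ∈ Icc a b → ‖u' s‖ ≤ C + 1 := by
    filter_upwards [huC] with s hs hmem
    calc ‖u s + d s‖ ≤ ‖u s‖ + ‖d s‖ := norm_add_le _ _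
    _ ≤ C + 1 := add_le_add (hs hmem) (hdbound s)
  have hadm' : admissible n a b u' := ⟨hu'm, C + 1, hu'C⟩
  have hd_ae : ∀ᵐ s ∂(volume : Measure ℝ), s ∈ Icc a b → ‖d s‖ ≤ 1 :=
    Filter.Eventually.of_forall fun s _ => hdbound s
  -- interval integrability of the kernel pieces
  have hIu : ∀ t, a ≤ t → t ≤ b →
      IntervalIntegrable (fun s => ((t - s) ^ (α - 1) / Real.Gamma α) • u s) volume a t :=
    fun t h1 h2 => smulker_intble hα0 h1 h2 hum huC
  have hId : ∀ t, a ≤ t → t ≤ b →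
      IntervalIntegrable (fun s => ((t - s) ^ (α - 1) / Real.Gamma α) • d s) volume a t :=
    fun t h1 h2 => smulker_intble hα0 h1 h2 hdmeas hd_ae
  -- trajectory splitting
  have trajsplit : ∀ t, a ≤ t → t ≤ b → traj n a α u' y t =
      traj n a α u y t + ∫ s in a..t, ((t - s) ^ (α - 1) / Real.Gamma α) • d s := by
    intro t h1 h2
    simp only [traj, hu'def]
    have heq : (fun s => ((t - s) ^ (α - 1) / Real.Gamma α) • (u s + d s))
        = fun s => ((t - s) ^ (α - 1) / Real.Gamma α) • u s
            + ((t - s) ^ (α - 1) / Real.Gamma α) • d s := by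
      funext s; rw [smul_add]
    rw [heq, intervalIntegral.integral_add (hIu t h1 h2) (hId t h1 h2), ← add_assoc]
  have Dzero : ∀ t, a ≤ t → t ≤ b - ε →
      (∫ s in a..t, ((t - s) ^ (α - 1) / Real.Gamma α) • d s) = 0 := by
    intro t h1 h2
    have heq : EqOn (fun s => ((t - s) ^ (α - 1) / Real.Gamma α) • d s)
        (fun _ => (0 : EuclideanSpace ℝ (Fin n))) (uIcc a t) := by
      intro s hs
      rw [uIcc_of_le h1] at hs
      have hd0 : d s = 0 :=
        Set.indicator_of_notMem (fun hmem => (not_lt.mpr (hs.2.trans h2)) hmem.1) _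
      simp [hd0]
    rw [intervalIntegral.integral_congr heq]
    simp
  have trajeq : ∀ t, a ≤ t → t ≤ b - ε → traj n a α u' y t = traj n a α u y t := by
    intro t h1 h2
    rw [trajsplit t h1 (by linarith), Dzero t h1 h2, add_zero]
  -- endpoint displacement
  have hIdb := hId b (by linarith) le_rfl
  have Db : (∫ s in a..b, ((b - s) ^ (α - 1) / Real.Gamma α) • d s) = r • v := by
    have hsub1 : IntervalIntegrable (fun s => ((b - s) ^ (α - 1) / Real.Gamma α) • d s)
        volume a (b - ε) := hIdb.mono_set (by
      rw [uIcc_of_le hab', uIcc_of_le hab.le]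
      exact Icc_subset_Icc le_rfl (by linarith))
    have hsub2 : IntervalIntegrable (fun s => ((b - s) ^ (α - 1) / Real.Gamma α) • d s)
        volume (b - ε) b := hIdb.mono_set (by
      rw [uIcc_of_le (by linarith : b - ε ≤ b), uIcc_of_le hab.le]
      exact Icc_subset_Icc hab' le_rfl)
    have hsplit := intervalIntegral.integral_add_adjacent_intervals hsub1 hsub2
    have h1 : (∫ s in a..(b-ε), ((b - s) ^ (α - 1) / Real.Gamma α) • d s) = 0 := by
      have heq : EqOn (fun s => ((b - s) ^ (α - 1) / Real.Gamma α) • d s)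
          (fun _ => (0 : EuclideanSpace ℝ (Fin n))) (uIcc a (b-ε)) := by
        intro s hs
        rw [uIcc_of_le hab'] at hs
        have hd0 : d s = 0 :=
          Set.indicator_of_notMem (fun hmem => (not_lt.mpr hs.2) hmem.1) _
        simp [hd0]
      rw [intervalIntegral.integral_congr heq]
      simp
    have h2 : (∫ s in (b-ε)..b, ((b - s) ^ (α - 1) / Real.Gamma α) • d s) = r • v := by
      have e1 : (∫ s in (b-ε)..b, ((b - s) ^ (α - 1) / Real.Gamma α) • d s)
          = ∫ s in (b-ε)..b, ((b - s) ^ (α - 1) / Real.Gamma α) • v := by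
        apply intervalIntegral.integral_congr_ae
        apply Filter.Eventually.of_forall
        intro s hs
        rw [uIoc_of_le (by linarith : b - ε ≤ b)] at hs
        rw [hddef, Set.indicator_of_mem hs]
      rw [e1, intervalIntegral.integral_smul_const, intervalIntegral.integral_div,
        ker_integral hα0 (by linarith : b - ε ≤ b)]
      rw [show b - (b - ε) = ε by ring, hrdef, div_div]
    rw [← hsplit, h1, zero_add, h2]
  have hxb' : traj n a α u' y b = xb + r • v := by
    rw [trajsplit b hab.le le_rfl, Db, hxbdef]
  -- φ decrease
  have hφdec : φ (y, traj n a α u' y b) - φ (y, xb) < -(‖g‖/2) * r := by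
    have h := hεslope
    rw [slope, sub_zero, smul_eq_mul] at h
    have h2 : ψ r - ψ 0 < r * (-‖g‖/2) := by
      have h3 := mul_lt_mul_of_pos_left h hrpos
      rwa [mul_inv_cancel_left₀ hrpos.ne'] at h3
    have hψr : ψ r = φ (y, traj n a α u' y b) := by rw [hψdef, hxb']
    have hψ0 : ψ 0 = φ (y, xb) := by simp [hψdef]
    rw [hψr, hψ0] at h2
    linarith
  -- bounds for L along both trajectories
  have htrajK : ∀ᵐ s ∂(volume : Measure ℝ).restrict (Ioc a b),
      |L (traj n a α u y s, u s, s)| ≤ M := by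
    filter_upwards [ae_restrict_of_ae huC, ae_restrict_mem measurableSet_Ioc] with s hs hmem
    apply hM
    refine ⟨?_, ?_, ⟨hmem.1.le, hmem.2⟩⟩
    · rw [Metric.mem_closedBall, dist_zero_right]
      refine (traj_bound hα0 hmem.1.le hmem.2 hum hC0 huC y).trans ?_
      rw [hRdef, hXdef]
      have : C * ((b - a) ^ α / (α * Real.Gamma α)) ≤ (C+1) * ((b - a) ^ α / (α * Real.Gamma α)) :=
        mul_le_mul_of_nonneg_right (by linarith) hX0
      linarith
    · rw [Metric.mem_closedBall, dist_zero_right]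
      exact (hs ⟨hmem.1.le, hmem.2⟩).trans (by linarith)
  have htrajK' : ∀ᵐ s ∂(volume : Measure ℝ).restrict (Ioc a b),
      |L (traj n a α u' y s, u' s, s)| ≤ M := by
    filter_upwards [ae_restrict_of_ae hu'C, ae_restrict_mem measurableSet_Ioc] with s hs hmem
    apply hM
    refine ⟨?_, ?_, ⟨hmem.1.le, hmem.2⟩⟩
    · rw [Metric.mem_closedBall, dist_zero_right]
      exact (traj_bound hα0 hmem.1.le hmem.2 hu'm (by linarith) hu'C y).trans le_rfl
    · rw [Metric.mem_closedBall, dist_zero_right]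
      exact hs ⟨hmem.1.le, hmem.2⟩
  -- integrability of the Lagrangian terms
  have hf : IntervalIntegrable
      (fun s => ((b - s) ^ (β - 1) / Real.Gamma β) * L (traj n a α u y s, u s, s))
      volume a b := bolza_intble hα0 hβ0 hab.le hum y hL.continuous htrajK
  have hf' : IntervalIntegrable
      (fun s => ((b - s) ^ (β - 1) / Real.Gamma β) * L (traj n a α u' y s, u' s, s))
      volume a b := bolza_intble hα0 hβ0 hab.le hu'm y hL.continuous htrajK'
  set f : ℝ → ℝ := fun s => ((b - s) ^ (β - 1) / Real.Gamma β) * L (traj n a α u y s, u s, s)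
    with hfdef
  set f' : ℝ → ℝ := fun s => ((b - s) ^ (β - 1) / Real.Gamma β) * L (traj n a α u' y s, u' s, s)
    with hf'def
  have hdiffint : (∫ s in a..b, (f' s - f s)) = (∫ s in a..b, f' s) - ∫ s in a..b, f s :=
    intervalIntegral.integral_sub hf' hf
  have hsub := hf'.sub hf
  have hsub1 : IntervalIntegrable (fun s => f' s - f s) volume a (b - ε) := hsub.mono_set (by
    rw [uIcc_of_le hab', uIcc_of_le hab.le]
    exact Icc_subset_Icc le_rfl (by linarith))
  have hsub2 : IntervalIntegrable (fun s => f' s - f s) volume (b - ε) b := hsub.mono_set (by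
    rw [uIcc_of_le (by linarith : b - ε ≤ b), uIcc_of_le hab.le]
    exact Icc_subset_Icc hab' le_rfl)
  have hsplit := intervalIntegral.integral_add_adjacent_intervals hsub1 hsub2
  have hfirst : (∫ s in a..(b-ε), (f' s - f s)) = 0 := by
    have heq : ∀ᵐ s ∂(volume : Measure ℝ), s ∈ Set.uIoc a (b - ε) → f' s - f s = 0 := by
      apply Filter.Eventually.of_forall
      intro s hs
      rw [uIoc_of_le hab'] at hs
      have hd0 : d s = 0 :=
        Set.indicator_of_notMem (fun hmem => (not_lt.mpr hs.2) hmem.1) _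
      have hus : u' s = u s := by rw [hu'def]; simp [hd0]
      rw [hfdef, hf'def]
      simp only
      rw [hus, trajeq s hs.1.le hs.2, sub_self]
    rw [intervalIntegral.integral_congr_ae heq]
    simp
  -- bound on the second piece
  have hker2 : IntervalIntegrable (fun s => (2*M) * ((b - s) ^ (β - 1) / Real.Gamma β))
      volume (b - ε) b := ((ker_intble hβ0 b (b-ε) b).div_const _).const_mul _
  have hsecond : ‖∫ s in (b-ε)..b, (f' s - f s)‖ ≤
      |∫ s in (b-ε)..b, (2*M) * ((b - s) ^ (β - 1) / Real.Gamma β)| := by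
    refine intervalIntegral.norm_integral_le_abs_of_norm_le ?_ hker2
    rw [uIoc_of_le (by linarith : b - ε ≤ b)]
    filter_upwards [ae_restrict_of_ae huC, ae_restrict_of_ae hu'C,
      ae_restrict_mem measurableSet_Ioc] with s h1 h2 hmem
    have hsIcc : s ∈ Icc a b := ⟨by linarith [hmem.1], hmem.2⟩
    have hw : 0 ≤ (b - s) ^ (β - 1) / Real.Gamma β :=
      div_nonneg (Real.rpow_nonneg (by linarith [hmem.2]) _) hΓβ.le
    have hL1 : |L (traj n a α u y s, u s, s)| ≤ M := by
      apply hM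
      refine ⟨?_, ?_, hsIcc⟩
      · rw [Metric.mem_closedBall, dist_zero_right]
        refine (traj_bound hα0 hsIcc.1 hsIcc.2 hum hC0 huC y).trans ?_
        rw [hRdef, hXdef]
        have : C * ((b - a) ^ α / (α * Real.Gamma α)) ≤ (C+1) * ((b - a) ^ α / (α * Real.Gamma α)) :=
          mul_le_mul_of_nonneg_right (by linarith) hX0
        linarith
      · rw [Metric.mem_closedBall, dist_zero_right]
        exact (h1 hsIcc).trans (by linarith)
    have hL2 : |L (traj n a α u' y s, u' s, s)| ≤ M := by
      apply hM
      refine ⟨?_, ?_, hsIcc⟩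
      · rw [Metric.mem_closedBall, dist_zero_right]
        exact (traj_bound hα0 hsIcc.1 hsIcc.2 hu'm (by linarith) hu'C y).trans le_rfl
      · rw [Metric.mem_closedBall, dist_zero_right]
        exact h2 hsIcc
    rw [Real.norm_eq_abs]
    calc |f' s - f s| ≤ |f' s| + |f s| := abs_sub _ _
    _ ≤ ((b - s) ^ (β - 1) / Real.Gamma β) * M + ((b - s) ^ (β - 1) / Real.Gamma β) * M := by
        apply add_le_add
        · rw [hf'def]; simp only; rw [abs_mul, abs_of_nonneg hw]
          exact mul_le_mul_of_nonneg_left hL2 hw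
        · rw [hfdef]; simp only; rw [abs_mul, abs_of_nonneg hw]
          exact mul_le_mul_of_nonneg_left hL1 hw
    _ = (2*M) * ((b - s) ^ (β - 1) / Real.Gamma β) := by ring
  have hker2val : (∫ s in (b-ε)..b, (2*M) * ((b - s) ^ (β - 1) / Real.Gamma β))
      = 2*M * (ε ^ β / (β * Real.Gamma β)) := by
    rw [intervalIntegral.integral_const_mul, intervalIntegral.integral_div,
      ker_integral hβ0 (by linarith : b - ε ≤ b), show b - (b - ε) = ε by ring, div_div]
  have hsecond' : |∫ s in (b-ε)..b, (f' s - f s)| ≤ 2*M * (ε ^ β / (β * Real.Gamma β)) := by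
    have := hsecond
    rw [hker2val, abs_of_nonneg (by positivity)] at this
    rwa [Real.norm_eq_abs] at this
  -- the key smallness estimate
  have key : 2*M * (ε ^ β / (β * Real.Gamma β)) ≤ ‖g‖/2 * r := by
    have hεβ : ε ^ β = ε ^ α * ε ^ (β - α) := by
      rw [← Real.rpow_add hε0]; ring_nf
    have hA : (0:ℝ) < ε ^ α := Real.rpow_pos_of_pos hε0 _
    have hB : (0:ℝ) ≤ ε ^ (β - α) := Real.rpow_nonneg hε0.le _
    have hBK : ε ^ (β - α) * (4 * (M+1) * (α * Real.Gamma α)) < ‖g‖ * (β * Real.Gamma β) := by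
      have hεK1' : ε ^ (β - α) < ‖g‖ * (β * Real.Gamma β) / (4 * (M+1) * (α * Real.Gamma α)) := by
        rw [← hK1def]; exact hεK1
      exact (lt_div_iff₀ (by positivity : (0:ℝ) < 4 * (M+1) * (α * Real.Gamma α))).mp hεK1'
    have goal' : 2*M*(ε^α*ε^(β-α))/(β*Real.Gamma β) ≤ ‖g‖ * ε^α/(2*(α*Real.Gamma α)) := by
      rw [div_le_div_iff₀ (by positivity) (by positivity)]
      nlinarith [mul_le_mul_of_nonneg_left hBK.le hA.le, mul_nonneg hA.le hB,
        mul_pos hα0 hΓα, mul_pos hβ0 hΓβ, mul_nonneg (mul_nonneg hA.le hB) (mul_pos hα0 hΓα).le]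
    rw [hrdef, hεβ]
    calc 2*M*(ε^α*ε^(β-α)/(β*Real.Gamma β)) = 2*M*(ε^α*ε^(β-α))/(β*Real.Gamma β) := by ring
    _ ≤ ‖g‖ * ε^α/(2*(α*Real.Gamma α)) := goal'
    _ = ‖g‖/2*(ε^α/(α*Real.Gamma α)) := by ring
  -- conclusion
  have hmin' := hmin u' y hadm'
  have hbolza : bolza n a b α β φ L u' y - bolza n a b α β φ L u y =
      (φ (y, traj n a α u' y b) - φ (y, xb)) + ((∫ s in a..b, f' s) - ∫ s in a..b, f s) := by
    rw [bolza, bolza, ← hxbdef, hfdef, hf'def]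
    ring
  have habs := abs_le.mp hsecond'
  have hInt : (∫ s in a..b, f' s) - (∫ s in a..b, f s) ≤ 2*M * (ε ^ β / (β * Real.Gamma β)) := by
    rw [← hdiffint, ← hsplit, hfirst, zero_add]
    exact habs.2
  linarith [hφdec, key, hmin', hbolza, hInt]
end
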